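/- Let R be a commutative ring and p a prime ideal generated by a regular sequence. Then the n-th symbolic power p^{(n)} equals the ordinary power p^n for every n ≥ 1. -/

import Mathlib

open MvPolynomial RingTheory.Sequence

namespace SymbPowAux
variable {R : Type*} [CommRing R]

lemma prod_pow_mem (J : Ideal R) {σ : Type*} (s : Finset σ) (f : σ → R)
    (hf : ∀ i ∈ s, f i ∈ J) (d : σ → ℕ) :
    (∏ i ∈ s, f i ^ d i) ∈ J ^ (∑ i ∈ s, d i) := by
  classical
  induction s using Finset.induction with
  | empty => simp
  | insert _ _ hxs ih =>
    rename_i a s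
    rw [Finset.prod_insert hxs, Finset.sum_insert hxs, pow_add]
    exact Ideal.mul_mem_mul (Ideal.pow_mem_pow (hf a (Finset.mem_insert_self a s)) _)
      (ih fun i hi => hf i (Finset.mem_insert_of_mem hi))

lemma eval_mem_of_coeff_mem {r : ℕ} (x : Fin r → R) (J : Ideal R) {n : ℕ}
    {F : MvPolynomial (Fin r) R} (hF : F.IsHomogeneous n)
    (hc : ∀ d, F.coeff d ∈ J) :
    MvPolynomial.eval x F ∈ J * (Ideal.span (Set.range x)) ^ n := by
  rw [MvPolynomial.eval_eq]
  refine Ideal.sum_mem _ fun d hd => ?_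
  have hdeg : d.degree = n := by
    rw [Finsupp.degree_eq_weight_one]; exact hF (MvPolynomial.mem_support_iff.mp hd)
  have : (∏ i ∈ d.support, x i ^ d i) ∈ (Ideal.span (Set.range x)) ^ n := by
    rw [← hdeg]
    exact prod_pow_mem _ _ _ (fun i _ => Ideal.subset_span (Set.mem_range_self i)) _
  exact Ideal.mul_mem_mul (hc d) this

lemma eval_mem_pow {r : ℕ} (x : Fin r → R) {n : ℕ}
    {F : MvPolynomial (Fin r) R} (hF : F.IsHomogeneous n) :
    MvPolynomial.eval x F ∈ (Ideal.span (Set.range x)) ^ n := by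
  have := eval_mem_of_coeff_mem x ⊤ hF (fun d => trivial)
  rwa [Ideal.top_mul] at this

lemma coeff_mul_mem {r : ℕ} (J : Ideal R) {F : MvPolynomial (Fin r) R}
    (hF : ∀ d, F.coeff d ∈ J) (Q : MvPolynomial (Fin r) R) (d : Fin r →₀ ℕ) :
    (F * Q).coeff d ∈ J := by
  rw [MvPolynomial.coeff_mul]
  exact Ideal.sum_mem _ fun p _ => Ideal.mul_mem_right _ _ (hF p.1)

lemma exists_homog_eval {r : ℕ} (x : Fin r → R) (J : Ideal R) :
    ∀ (n : ℕ) (a : R), a ∈ J * (Ideal.span (Set.range x)) ^ n →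
      ∃ F : MvPolynomial (Fin r) R, F.IsHomogeneous n ∧ (∀ d, F.coeff d ∈ J) ∧
        MvPolynomial.eval x F = a := by
  intro n
  induction n with
  | zero =>
    intro a ha
    rw [pow_zero, mul_one] at ha
    refine ⟨C a, isHomogeneous_C _ _, fun d => ?_, eval_C a⟩
    rw [MvPolynomial.coeff_C]
    split <;> simp [ha]
  | succ n ih =>
    intro a ha
    rw [pow_succ, ← mul_assoc] at ha
    refine Submodule.mul_induction_on ha ?_ ?_
    · intro b hb c hc
      obtain ⟨F, hFh, hFc, hFe⟩ := ih b hb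
      rw [Ideal.span, Finsupp.mem_span_range_iff_exists_finsupp] at hc
      obtain ⟨g, hg⟩ := hc
      refine ⟨F * (g.sum fun i ci => C ci * X i), ?_, coeff_mul_mem J hFc _, ?_⟩
      · refine hFh.mul ?_
        refine IsHomogeneous.sum _ _ _ fun i _ => ?_
        exact (isHomogeneous_X R i).C_mul _
      · rw [map_mul, hFe]
        congr 1
        rw [Finsupp.sum, map_sum]
        simp only [map_mul, eval_C, eval_X]
        rw [← hg, Finsupp.sum]
        simp [smul_eq_mul]
    · rintro p q ⟨F, hFh, hFc, hFe⟩ ⟨G, hGh, hGc, hGe⟩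
      exact ⟨F + G, hFh.add hGh, fun d => by simpa using Ideal.add_mem J (hFc d) (hGc d),
        by rw [map_add, hFe, hGe]⟩

/-- Convert the "evaluates to zero" version of quasi-regularity at degree `n`
to the `I^(n+1)` version. -/
lemma power_version {r : ℕ} (x : Fin r → R) (n : ℕ)
    (zv : ∀ F : MvPolynomial (Fin r) R, F.IsHomogeneous n →
      MvPolynomial.eval x F = 0 → ∀ d, F.coeff d ∈ Ideal.span (Set.range x)) :
    ∀ F : MvPolynomial (Fin r) R, F.IsHomogeneous n →
      MvPolynomial.eval x F ∈ (Ideal.span (Set.range x)) ^ (n + 1) →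
      ∀ d, F.coeff d ∈ Ideal.span (Set.range x) := by
  intro F hF hFe d
  rw [pow_succ'] at hFe
  obtain ⟨G, hGh, hGc, hGe⟩ := exists_homog_eval x _ n _ hFe
  have h0 : MvPolynomial.eval x (F - G) = 0 := by rw [map_sub, hGe, sub_self]
  have := zv (F - G) (hF.sub hGh) h0 d
  have h2 : F.coeff d = (F - G).coeff d + G.coeff d := by
    rw [MvPolynomial.coeff_sub]; ring
  rw [h2]
  exact Ideal.add_mem _ this (hGc d)

lemma degree_add {σ : Type*} (a b : σ →₀ ℕ) : (a + b).degree = a.degree + b.degree := by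
  simp [Finsupp.degree_eq_weight_one]

lemma degree_single {σ : Type*} (i : σ) (k : ℕ) : (Finsupp.single i k).degree = k := by
  classical
  rcases eq_or_ne k 0 with rfl | hk
  · simp
  · exact Finsupp.degree_single i k

lemma ofList_ofFn {r : ℕ} (x : Fin r → R) :
    Ideal.ofList (List.ofFn x) = Ideal.span (Set.range x) := by
  refine congrArg Ideal.span (Set.ext fun a => ?_)
  rw [Set.mem_setOf_eq, List.mem_ofFn, Set.mem_range]

/-- From weak regularity of `x : Fin (r+1) → R`: the prefix is weakly regular and
the last entry is a nonzerodivisor modulo the prefix ideal. -/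
lemma peel {r : ℕ} (x : Fin (r+1) → R)
    (h : IsWeaklyRegular R (List.ofFn x)) :
    IsWeaklyRegular R (List.ofFn (x ∘ Fin.castSucc)) ∧
      (∀ a : R, x (Fin.last r) * a ∈ Ideal.span (Set.range (x ∘ Fin.castSucc)) →
        a ∈ Ideal.span (Set.range (x ∘ Fin.castSucc))) := by
  rw [List.ofFn_succ'] at h
  rw [List.concat_eq_append, isWeaklyRegular_append_iff] at h
  obtain ⟨h1, h2⟩ := h
  refine ⟨h1, fun a ha => ?_⟩
  set J : Ideal R := Ideal.span (Set.range (x ∘ Fin.castSucc)) with hJ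
  have hJ' : Ideal.ofList (List.ofFn (x ∘ Fin.castSucc)) = J := ofList_ofFn _
  rw [isWeaklyRegular_singleton_iff,
    show (List.ofFn fun i => x i.castSucc) = List.ofFn (x ∘ Fin.castSucc) from rfl, hJ'] at h2
  have hsm : (J • ⊤ : Submodule R R) = J := by
    rw [smul_eq_mul, Ideal.mul_top]
  rw [hsm] at h2
  have : x (Fin.last r) • (Submodule.Quotient.mk a : R ⧸ (J : Submodule R R))
      = x (Fin.last r) • (0 : R ⧸ (J : Submodule R R)) := by
    rw [smul_zero, ← Submodule.Quotient.mk_smul, smul_eq_mul,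
      Submodule.Quotient.mk_eq_zero]
    exact ha
  have := h2 this
  rwa [Submodule.Quotient.mk_eq_zero] at this

/-- The key theorem: a weakly regular sequence is quasi-regular (zero version). -/
theorem zv_all : ∀ (r : ℕ) (x : Fin r → R),
    IsWeaklyRegular R (List.ofFn x) →
    ∀ (n : ℕ) (F : MvPolynomial (Fin r) R), F.IsHomogeneous n →
      MvPolynomial.eval x F = 0 → ∀ d, F.coeff d ∈ Ideal.span (Set.range x) := by
  intro r
  induction r with
  | zero =>
    intro x _ n F _ hFe d
    obtain ⟨c, rfl⟩ := MvPolynomial.C_surjective (Fin 0) F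
    rw [eval_C] at hFe
    subst hFe
    simp
  | succ r IH =>
    intro x hx n
    -- setup
    set l : Fin (r+1) := Fin.last r with hl
    set y : Fin r → R := x ∘ Fin.castSucc with hy
    set z : R := x l with hz
    set I : Ideal R := Ideal.span (Set.range x) with hI
    set J : Ideal R := Ideal.span (Set.range y) with hJdef
    obtain ⟨hyreg, hzJ⟩ := peel x hx
    have hJI : J ≤ I := Ideal.span_mono (Set.range_comp_subset_range _ _)
    have hzI : z ∈ I := Ideal.subset_span (Set.mem_range_self l)
    -- quasi-regularity of the prefix, power version, all degrees
    have qry : ∀ (m : ℕ) (F : MvPolynomial (Fin r) R), F.IsHomogeneous m →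
        MvPolynomial.eval y F ∈ J ^ (m+1) → ∀ d, F.coeff d ∈ J :=
      fun m => power_version y m (IH y hyreg m)
    -- z is a nonzerodivisor modulo all powers of J
    have hJpow : ∀ (m : ℕ) (a : R), z * a ∈ J ^ m → a ∈ J ^ m := by
      intro m
      induction m with
      | zero => simp
      | succ m ihm =>
        intro a ha
        have ham : a ∈ J ^ m := ihm a (Ideal.pow_le_pow_right (Nat.le_succ m) ha)
        have : a ∈ ⊤ * J ^ m := by rwa [Ideal.top_mul]
        obtain ⟨A, hAh, -, hAe⟩ := exists_homog_eval y ⊤ m a this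
        have hCz : MvPolynomial.eval y (C z * A) ∈ J ^ (m+1) := by
          rw [map_mul, eval_C, hAe]; exact ha
        have hcoef : ∀ d, A.coeff d ∈ J := by
          intro d
          have := qry m (C z * A) (hAh.C_mul z) hCz d
          rw [MvPolynomial.coeff_C_mul] at this
          exact hzJ _ this
        have := eval_mem_of_coeff_mem y J hAh hcoef
        rw [hAe, ← pow_succ'] at this
        exact this
    -- inner induction on the degree n
    induction n with
    | zero =>
      intro F hF hFe d
      have h0 : F = C (F.coeff 0) := by
        ext d'
        rw [MvPolynomial.coeff_C]
        split
        · next h => rw [h]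
        · next h =>
          by_contra hne
          have := hF hne
          rw [Pi.one_def, ← Finsupp.degree_eq_weight_one, Finsupp.degree_eq_zero_iff] at this
          exact h this.symm
      rw [h0, eval_C] at hFe
      rw [h0, hFe]
      simp
    | succ m ihn =>
      intro F hF hFe d
      classical
      set e : Fin (r+1) →₀ ℕ := Finsupp.single l 1 with he
      set S0 : Finset (Fin (r+1) →₀ ℕ) := F.support.filter (fun d => d l = 0) with hS0
      set S1 : Finset (Fin (r+1) →₀ ℕ) := F.support.filter (fun d => d l ≠ 0) with hS1
      set G : MvPolynomial (Fin (r+1)) R := ∑ d ∈ S0, monomial d (F.coeff d) with hG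
      set H : MvPolynomial (Fin (r+1)) R := ∑ d ∈ S1, monomial (d - e) (F.coeff d) with hH
      -- basic degree facts
      have hdegS : ∀ d' ∈ F.support, (d' : Fin (r+1) →₀ ℕ).degree = m + 1 := by
        intro d' hd'
        rw [Finsupp.degree_eq_weight_one]
        exact hF (MvPolynomial.mem_support_iff.mp hd')
      have hsub : ∀ d' ∈ S1, e ≤ d' := by
        intro d' hd'
        rw [hS1, Finset.mem_filter] at hd'
        rw [he, Finsupp.single_le_iff]
        exact Nat.one_le_iff_ne_zero.mpr hd'.2
      -- F = G + X l * H
      have hsplit : F = G + X l * H := by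
        rw [hG, hH, Finset.mul_sum]
        have : ∀ d' ∈ S1, (X l : MvPolynomial (Fin (r+1)) R) * monomial (d' - e) (F.coeff d')
            = monomial d' (F.coeff d') := by
          intro d' hd'
          have hXl : (X l : MvPolynomial (Fin (r+1)) R) = monomial e 1 := by
            rw [he]; rfl
          rw [hXl, MvPolynomial.monomial_mul, one_mul,
            add_tsub_cancel_of_le (hsub d' hd')]
        have hun : S0 ∪ S1 = F.support := by
          rw [hS0, hS1]; exact Finset.filter_union_filter_not_eq _ _
        have hdisj : Disjoint S0 S1 := by
          rw [hS0, hS1]; exact Finset.disjoint_filter_filter_not _ _ _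
        rw [Finset.sum_congr rfl this, ← Finset.sum_union hdisj, hun]
        exact (MvPolynomial.support_sum_monomial_coeff F).symm
      -- homogeneity of G and H
      have hGh : G.IsHomogeneous (m+1) := by
        refine IsHomogeneous.sum _ _ _ fun d' hd' => ?_
        exact isHomogeneous_monomial _ (hdegS d' (Finset.mem_of_mem_filter _ hd'))
      have hHh : H.IsHomogeneous m := by
        refine IsHomogeneous.sum _ _ _ fun d' hd' => ?_
        refine isHomogeneous_monomial _ ?_
        have h1 : (d' - e) + e = d' := tsub_add_cancel_of_le (hsub d' hd')
        have h2 : (d' - e).degree + e.degree = m + 1 := by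
          rw [← degree_add, h1]
          exact hdegS d' (Finset.mem_of_mem_filter _ hd')
        rw [he, degree_single] at h2
        exact Nat.add_right_cancel h2
      -- the restriction of G to the first r variables
      have hinj : Function.Injective (Fin.castSucc : Fin r → Fin (r+1)) :=
        Fin.castSucc_injective r
      set ρ : (Fin (r+1) →₀ ℕ) → (Fin r →₀ ℕ) :=
        fun d' => Finsupp.comapDomain Fin.castSucc d' hinj.injOn with hρ
      have hmapρ : ∀ d' : Fin (r+1) →₀ ℕ, d' l = 0 →
          Finsupp.mapDomain Fin.castSucc (ρ d') = d' := by
        intro d' hd'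
        refine Finsupp.mapDomain_comapDomain _ hinj d' ?_
        intro i hi
        rcases Fin.eq_castSucc_of_ne_last (x := i) (by
          rintro rfl
          exact (Finsupp.mem_support_iff.mp hi) hd') with ⟨j, hj⟩
        exact ⟨j, hj⟩
      set G' : MvPolynomial (Fin r) R := ∑ d' ∈ S0, monomial (ρ d') (F.coeff d') with hG'
      have hren : rename Fin.castSucc G' = G := by
        rw [hG', map_sum]
        refine Finset.sum_congr rfl fun d' hd' => ?_
        rw [rename_monomial, hmapρ d' (Finset.mem_filter.mp hd').2]
      -- evaluations
      have hevG : MvPolynomial.eval x G = MvPolynomial.eval y G' := by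
        rw [← hren, eval_rename]
      have hevsum : MvPolynomial.eval x G + z * MvPolynomial.eval x H = 0 := by
        have := congrArg (MvPolynomial.eval x) hsplit
        rw [hFe, map_add, map_mul, eval_X] at this
        exact this.symm
      have hG'h : G'.IsHomogeneous (m+1) := by
        rw [← IsHomogeneous.rename_isHomogeneous_iff hinj, hren]
        exact hGh
      have hGJ : MvPolynomial.eval x G ∈ J ^ (m+1) := by
        rw [hevG]; exact eval_mem_pow y hG'h
      have hzH : z * MvPolynomial.eval x H ∈ J ^ (m+1) := by
        have heq : z * MvPolynomial.eval x H = - MvPolynomial.eval x G := by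
          linear_combination hevsum
        rw [heq]
        exact neg_mem hGJ
      have hHJ : MvPolynomial.eval x H ∈ J ^ (m+1) := hJpow _ _ hzH
      -- coefficients of H are in I, via the inner induction hypothesis
      have hHc : ∀ d', H.coeff d' ∈ I := by
        have hHpow : MvPolynomial.eval x H ∈ I ^ (m+1) :=
          Ideal.pow_right_mono hJI _ hHJ
        exact power_version x m ihn H hHh hHpow
      -- B : the H-value as a homogeneous polynomial in the first r variables
      have : MvPolynomial.eval x H ∈ ⊤ * J ^ (m+1) := by rwa [Ideal.top_mul]
      obtain ⟨B, hBh, -, hBe⟩ := exists_homog_eval y ⊤ (m+1) _ this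
      set W : MvPolynomial (Fin r) R := G' + C z * B with hW
      have hWh : W.IsHomogeneous (m+1) := hG'h.add (hBh.C_mul z)
      have hWe : MvPolynomial.eval y W = 0 := by
        rw [hW, map_add, map_mul, eval_C, hBe, ← hevG]
        exact hevsum
      have hWc : ∀ d', W.coeff d' ∈ J := IH y hyreg (m+1) W hWh hWe
      -- now conclude for an arbitrary exponent d
      by_cases hdF : F.coeff d = 0
      · rw [hdF]; exact Ideal.zero_mem I
      have hdsupp : d ∈ F.support := MvPolynomial.mem_support_iff.mpr hdF
      by_cases hdl : d l = 0
      · -- d belongs to S0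
        have hdS0 : d ∈ S0 := by rw [hS0, Finset.mem_filter]; exact ⟨hdsupp, hdl⟩
        have hcoeffG' : G'.coeff (ρ d) = F.coeff d := by
          rw [hG', MvPolynomial.coeff_sum]
          rw [Finset.sum_eq_single d (fun d' hd' hne => ?_) (fun h => absurd hdS0 h)]
          · rw [MvPolynomial.coeff_monomial, if_pos rfl]
          · rw [MvPolynomial.coeff_monomial, if_neg]
            intro hρeq
            apply hne
            have := congrArg (Finsupp.mapDomain (Fin.castSucc : Fin r → Fin (r+1))) hρeq
            rwa [hmapρ d' (Finset.mem_filter.mp hd').2, hmapρ d hdl] at this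
        have := hWc (ρ d)
        rw [hW, MvPolynomial.coeff_add, MvPolynomial.coeff_C_mul, hcoeffG'] at this
        have : F.coeff d = (F.coeff d + z * B.coeff (ρ d)) - z * B.coeff (ρ d) := by ring
        rw [this]
        exact Ideal.sub_mem _ (hJI (by assumption)) (Ideal.mul_mem_right _ _ hzI)
      · -- d belongs to S1
        have hdS1 : d ∈ S1 := by rw [hS1, Finset.mem_filter]; exact ⟨hdsupp, hdl⟩
        have hcoeffH : H.coeff (d - e) = F.coeff d := by
          rw [hH, MvPolynomial.coeff_sum]
          rw [Finset.sum_eq_single d (fun d' hd' hne => ?_) (fun h => absurd hdS1 h)]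
          · rw [MvPolynomial.coeff_monomial, if_pos rfl]
          · rw [MvPolynomial.coeff_monomial, if_neg]
            intro hsubeq
            apply hne
            have := congrArg (· + e) hsubeq
            simpa [tsub_add_cancel_of_le (hsub d' hd'), tsub_add_cancel_of_le (hsub d hdS1)]
              using this
        rw [← hcoeffH]
        exact hHc _

/-- The powers of a prime ideal generated by a weakly regular sequence are primary:
multiplication by an element outside the ideal can be cancelled. -/
lemma primary_powers {r : ℕ} (x : Fin r → R)
    (hreg : IsWeaklyRegular R (List.ofFn x))
    (hP : (Ideal.span (Set.range x)).IsPrime)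
    (n : ℕ) (u a : R) (hu : u ∉ Ideal.span (Set.range x))
    (hua : u * a ∈ (Ideal.span (Set.range x)) ^ n) :
    a ∈ (Ideal.span (Set.range x)) ^ n := by
  set I : Ideal R := Ideal.span (Set.range x) with hI
  have qr : ∀ (m : ℕ) (F : MvPolynomial (Fin r) R), F.IsHomogeneous m →
      MvPolynomial.eval x F ∈ I ^ (m+1) → ∀ d, F.coeff d ∈ I :=
    fun m => power_version x m (zv_all r x hreg m)
  suffices h : ∀ k, k ≤ n → a ∈ I ^ k from h n le_rfl
  intro k
  induction k with
  | zero => intro _; simp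
  | succ k ih =>
    intro hk1
    have hak : a ∈ I ^ k := ih (le_trans (Nat.le_succ k) hk1)
    have : a ∈ ⊤ * I ^ k := by rwa [Ideal.top_mul]
    obtain ⟨A, hAh, -, hAe⟩ := exists_homog_eval x ⊤ k a this
    have huA : MvPolynomial.eval x (C u * A) ∈ I ^ (k+1) := by
      rw [map_mul, eval_C, hAe]
      exact Ideal.pow_le_pow_right hk1 hua
    have hcoeff : ∀ d, A.coeff d ∈ I := by
      intro d
      have := qr k (C u * A) (hAh.C_mul u) huA d
      rw [MvPolynomial.coeff_C_mul] at this
      exact (hP.mem_or_mem this).resolve_left hu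
    have := eval_mem_of_coeff_mem x I hAh hcoeff
    rwa [hAe, ← pow_succ'] at this

end SymbPowAux


/-- The `n`-th symbolic power of a prime ideal `P`: the contraction of `PⁿR_P` under
`R → R_P`. -/
noncomputable def symbolicPower {R : Type*} [CommRing R] (P : Ideal R) [P.IsPrime]
    (n : ℕ) : Ideal R :=
  ((P ^ n).map (algebraMap R (Localization.AtPrime P))).comap
    (algebraMap R (Localization.AtPrime P))

/-- Let `R` be a Noetherian commutative ring and `P` a prime ideal
generated by a regular sequence.  Then the `n`-th symbolic power `P⁽ⁿ⁾` equals the ordinary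
power `Pⁿ` for every `n ≥ 1`. -/
theorem symbolicPower_eq_pow_of_regular_generators
    (R : Type*) [CommRing R] [IsNoetherianRing R] (P : Ideal R) [P.IsPrime]
    (r : ℕ) (x : Fin r → R)
    (hgen : Ideal.span (Set.range x) = P)
    (hreg : RingTheory.Sequence.IsRegular R (List.ofFn x))
    (n : ℕ) (hn : 1 ≤ n) :
    symbolicPower P n = P ^ n := by
  refine le_antisymm ?_ Ideal.le_comap_map
  intro a ha
  rw [symbolicPower, Ideal.mem_comap,
    IsLocalization.mem_map_algebraMap_iff P.primeCompl] at ha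
  obtain ⟨⟨b, s⟩, hb⟩ := ha
  rw [← map_mul] at hb
  obtain ⟨c, hc⟩ := (IsLocalization.eq_iff_exists P.primeCompl _).mp hb
  have hmem : ((c : R) * s) * a ∈ P ^ n := by
    have heq : ((c : R) * s) * a = (c : R) * b := by rw [← hc]; ring
    rw [heq]
    exact Ideal.mul_mem_left _ _ b.2
  have hu : (c : R) * (s : R) ∉ P := (c * s).2
  subst hgen
  exact SymbPowAux.primary_powers x hreg.toIsWeaklyRegular ‹_› n _ a hu hmem
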